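/- Consider a partitioned Runge–Kutta method with coefficients (a_{ij}, b_i) and (â_{ij}, b̂_i) applied to a canonical Hamiltonian system q̇ = ∇_p H, ṗ = −∇_q H with separable Hamiltonian H(q,p) = T(p) + V(q), with T, V of class C². If the compatibility condition b_i â_{ij} + b̂_j a_{ji} = b_i b̂_j holds for all i,j, then for sufficiently small h the one-step map (q_0,p_0) ↦ (q_1,p_1) is symplectic. -/

import Mathlib

/-- The canonical symplectic form on `ℝ^{2d} = (Fin d → ℝ) × (Fin d → ℝ)`. -/
noncomputable def canonicalForm (d : ℕ)
    (u v : (Fin d → ℝ) × (Fin d → ℝ)) : ℝ :=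
  ∑ i, (u.1 i * v.2 i - u.2 i * v.1 i)

/-- The gradient of a function `ℝ^d → ℝ`. -/
noncomputable def gradVec (d : ℕ) (V : (Fin d → ℝ) → ℝ) (q : Fin d → ℝ) : Fin d → ℝ :=
  fun i => fderiv ℝ V q (Pi.single i 1)

namespace PRKaux

noncomputable def iota (d : ℕ) : ((Fin d → ℝ) →L[ℝ] ℝ) →L[ℝ] (Fin d → ℝ) :=
  ContinuousLinearMap.pi fun j => ContinuousLinearMap.apply ℝ ℝ (Pi.single j 1)

lemma gradVec_eq (d : ℕ) (T : (Fin d → ℝ) → ℝ) :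
    gradVec d T = fun q => iota d (fderiv ℝ T q) := rfl

lemma grad_contDiff {d : ℕ} {T : (Fin d → ℝ) → ℝ} (hT : ContDiff ℝ 2 T) :
    ContDiff ℝ 1 (gradVec d T) := by
  rw [gradVec_eq]
  exact (iota d).contDiff.comp (hT.fderiv_right (by norm_num))

noncomputable def dotf {d : ℕ} (x y : Fin d → ℝ) : ℝ := ∑ j, x j * y j

lemma grad_symm {d : ℕ} {T : (Fin d → ℝ) → ℝ} (hT : ContDiff ℝ 2 T) (p x y : Fin d → ℝ) :
    dotf (fderiv ℝ (gradVec d T) p x) y = dotf (fderiv ℝ (gradVec d T) p y) x := by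
  have hf' : ContDiff ℝ 1 (fderiv ℝ T) := hT.fderiv_right (by norm_num)
  have hd : HasFDerivAt (fderiv ℝ T) (fderiv ℝ (fderiv ℝ T) p) p :=
    (hf'.differentiable one_ne_zero p).hasFDerivAt
  have hG : HasFDerivAt (gradVec d T) ((iota d).comp (fderiv ℝ (fderiv ℝ T) p)) p := by
    rw [gradVec_eq]
    exact ((iota d).hasFDerivAt.comp p hd)
  rw [hG.fderiv]
  have hsymm : IsSymmSndFDerivAt ℝ T p := hT.contDiffAt.isSymmSndFDerivAt (by norm_num)
  have key : ∀ w u : Fin d → ℝ,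
      dotf (iota d ((fderiv ℝ (fderiv ℝ T) p) w)) u = fderiv ℝ (fderiv ℝ T) p w u := by
    intro w u
    have h1 : ∀ j : Fin d, (u j • (Pi.single j (1:ℝ) : Fin d → ℝ)) = Pi.single j (u j) := by
      intro j; ext k; simp [Pi.single_apply, mul_comm]
    have : dotf (iota d ((fderiv ℝ (fderiv ℝ T) p) w)) u
        = ∑ j, (fderiv ℝ (fderiv ℝ T) p) w (u j • (Pi.single j (1:ℝ) : Fin d → ℝ)) := by
      simp [dotf, iota, mul_comm]
    rw [this, ← map_sum]
    congr 1
    simp only [h1]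
    exact Finset.univ_sum_single u
  simp only [ContinuousLinearMap.comp_apply, key]
  exact hsymm x y

variable {d : ℕ}

lemma dotf_comm (x y : Fin d → ℝ) : dotf x y = dotf y x := by
  simp [dotf, mul_comm]

lemma dotf_add_right (x y z : Fin d → ℝ) : dotf x (y + z) = dotf x y + dotf x z := by
  simp [dotf, mul_add, Finset.sum_add_distrib]

lemma dotf_sub_right (x y z : Fin d → ℝ) : dotf x (y - z) = dotf x y - dotf x z := by
  simp [dotf, mul_sub, Finset.sum_sub_distrib]

lemma dotf_smul_right (c : ℝ) (x y : Fin d → ℝ) : dotf x (c • y) = c * dotf x y := by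
  simp only [dotf, Finset.mul_sum, Pi.smul_apply, smul_eq_mul]
  exact Finset.sum_congr rfl fun i _ => by ring

lemma dotf_sum_right {ι : Type*} (s : Finset ι) (x : Fin d → ℝ) (f : ι → Fin d → ℝ) :
    dotf x (∑ i ∈ s, f i) = ∑ i ∈ s, dotf x (f i) := by
  simp [dotf, Finset.mul_sum]
  rw [Finset.sum_comm]

lemma dotf_add_left (x y z : Fin d → ℝ) : dotf (x + y) z = dotf x z + dotf y z := by
  rw [dotf_comm, dotf_add_right, dotf_comm z x, dotf_comm z y]

lemma dotf_sub_left (x y z : Fin d → ℝ) : dotf (x - y) z = dotf x z - dotf y z := by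
  rw [dotf_comm, dotf_sub_right, dotf_comm z x, dotf_comm z y]

lemma dotf_smul_left (c : ℝ) (x y : Fin d → ℝ) : dotf (c • x) y = c * dotf x y := by
  rw [dotf_comm, dotf_smul_right, dotf_comm]

lemma dotf_sum_left {ι : Type*} (s : Finset ι) (f : ι → Fin d → ℝ) (y : Fin d → ℝ) :
    dotf (∑ i ∈ s, f i) y = ∑ i ∈ s, dotf (f i) y := by
  rw [dotf_comm, dotf_sum_right]
  exact Finset.sum_congr rfl fun i _ => dotf_comm _ _

lemma canonicalForm_eq_dotf (x y : (Fin d → ℝ) × (Fin d → ℝ)) :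
    canonicalForm d x y = dotf x.1 y.2 - dotf x.2 y.1 := by
  simp [canonicalForm, dotf, Finset.sum_sub_distrib]

end PRKaux


open PRKaux

set_option maxHeartbeats 1000000 in
/-- **Symplecticity of partitioned Runge–Kutta methods.** Consider a partitioned RK method
with coefficients `(a, b)` and `(â, b̂)` applied to the separable canonical Hamiltonian system
`q̇ = ∇T(p)`, `ṗ = −∇V(q)` with `T, V` of class `C²`.  Suppose the compatibility condition
`bᵢ âᵢⱼ + b̂ⱼ aⱼᵢ = bᵢ b̂ⱼ` holds, and let `Q, P` be (differentiable) stage maps solving the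
stage equations (such maps exist for sufficiently small `h`).  Then the one-step map
`(q₀,p₀) ↦ (q₀ + h∑ᵢ bᵢ ∇T(Pᵢ), p₀ − h∑ᵢ b̂ᵢ ∇V(Qᵢ))` is symplectic. -/
theorem stmt_13 (d ns : ℕ) (T V : (Fin d → ℝ) → ℝ)
    (hT : ContDiff ℝ 2 T) (hV : ContDiff ℝ 2 V)
    (a ah : Fin ns → Fin ns → ℝ) (b bh : Fin ns → ℝ)
    (hcompat : ∀ i j, b i * ah i j + bh j * a j i = b i * bh j)
    (h : ℝ)
    (Q P : (Fin d → ℝ) × (Fin d → ℝ) → Fin ns → (Fin d → ℝ))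
    (hQ : ∀ z i, Q z i = z.1 + h • ∑ j, a i j • gradVec d T (P z j))
    (hP : ∀ z i, P z i = z.2 - h • ∑ j, ah i j • gradVec d V (Q z j))
    (hQd : ∀ i, Differentiable ℝ (fun z => Q z i))
    (hPd : ∀ i, Differentiable ℝ (fun z => P z i)) :
    let Φ : (Fin d → ℝ) × (Fin d → ℝ) → (Fin d → ℝ) × (Fin d → ℝ) := fun z =>
      (z.1 + h • ∑ i, b i • gradVec d T (P z i),
       z.2 - h • ∑ i, bh i • gradVec d V (Q z i))
    ∀ z u v, canonicalForm d (fderiv ℝ Φ z u) (fderiv ℝ Φ z v) = canonicalForm d u v := by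
  intro Φ z u v
  have hGT : Differentiable ℝ (gradVec d T) := (grad_contDiff hT).differentiable one_ne_zero
  have hGV : Differentiable ℝ (gradVec d V) := (grad_contDiff hV).differentiable one_ne_zero
  have hGTd : ∀ i, Differentiable ℝ (fun z => gradVec d T (P z i)) :=
    fun i => hGT.comp (hPd i)
  have hGVd : ∀ i, Differentiable ℝ (fun z => gradVec d V (Q z i)) :=
    fun i => hGV.comp (hQd i)
  set DP : Fin ns → _ := fun i => fderiv ℝ (fun z => P z i) z with hDPdef
  set DQ : Fin ns → _ := fun i => fderiv ℝ (fun z => Q z i) z with hDQdef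
  set KT : Fin ns → _ := fun i => fderiv ℝ (fun z => gradVec d T (P z i)) z with hKTdef
  set KV : Fin ns → _ := fun i => fderiv ℝ (fun z => gradVec d V (Q z i)) z with hKVdef
  -- chain rule for the composite gradient maps
  have hKT : ∀ i, KT i = (fderiv ℝ (gradVec d T) (P z i)).comp (DP i) := by
    intro i
    exact fderiv_comp z (hGT (P z i)) (hPd i z)
  have hKV : ∀ i, KV i = (fderiv ℝ (gradVec d V) (Q z i)).comp (DQ i) := by
    intro i
    exact fderiv_comp z (hGV (Q z i)) (hQd i z)
  -- derivatives of stage equations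
  have dQ : ∀ i (w : (Fin d → ℝ) × (Fin d → ℝ)),
      DQ i w = w.1 + h • ∑ j, a i j • KT j w := by
    intro i w
    have heq : (fun z => Q z i)
        = fun z => z.1 + h • ∑ j, a i j • gradVec d T (P z j) := funext fun z => hQ z i
    have hR : HasFDerivAt (fun z : (Fin d → ℝ) × (Fin d → ℝ) =>
          z.1 + h • ∑ j, a i j • gradVec d T (P z j))
        (ContinuousLinearMap.fst ℝ _ _ + h • ∑ j, a i j • KT j) z := by
      apply (hasFDerivAt_fst).add
      apply HasFDerivAt.const_smul (c := h) (f := fun z => ∑ j, a i j • gradVec d T (P z j))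
      apply HasFDerivAt.fun_sum
      intro j _
      exact ((hGTd j z).hasFDerivAt).const_smul (a i j)
    have : DQ i = ContinuousLinearMap.fst ℝ _ _ + h • ∑ j, a i j • KT j := by
      rw [hDQdef]; simp only; rw [heq]; exact hR.fderiv
    rw [this]
    simp [ContinuousLinearMap.sum_apply]
  have dP : ∀ i (w : (Fin d → ℝ) × (Fin d → ℝ)),
      DP i w = w.2 - h • ∑ j, ah i j • KV j w := by
    intro i w
    have heq : (fun z => P z i)
        = fun z => z.2 - h • ∑ j, ah i j • gradVec d V (Q z j) := funext fun z => hP z i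
    have hR : HasFDerivAt (fun z : (Fin d → ℝ) × (Fin d → ℝ) =>
          z.2 - h • ∑ j, ah i j • gradVec d V (Q z j))
        (ContinuousLinearMap.snd ℝ _ _ - h • ∑ j, ah i j • KV j) z := by
      apply (hasFDerivAt_snd).sub
      apply HasFDerivAt.const_smul (c := h) (f := fun z => ∑ j, ah i j • gradVec d V (Q z j))
      apply HasFDerivAt.fun_sum
      intro j _
      exact ((hGVd j z).hasFDerivAt).const_smul (ah i j)
    have : DP i = ContinuousLinearMap.snd ℝ _ _ - h • ∑ j, ah i j • KV j := by
      rw [hDPdef]; simp only; rw [heq]; exact hR.fderiv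
    rw [this]
    simp [ContinuousLinearMap.sum_apply]
  -- derivative of the one-step map
  have dPhi : ∀ w : (Fin d → ℝ) × (Fin d → ℝ),
      fderiv ℝ Φ z w = (w.1 + h • ∑ i, b i • KT i w, w.2 - h • ∑ i, bh i • KV i w) := by
    intro w
    have h1 : HasFDerivAt (fun z : (Fin d → ℝ) × (Fin d → ℝ) =>
          z.1 + h • ∑ i, b i • gradVec d T (P z i))
        (ContinuousLinearMap.fst ℝ _ _ + h • ∑ i, b i • KT i) z := by
      apply (hasFDerivAt_fst).add
      apply HasFDerivAt.const_smul (c := h) (f := fun z => ∑ i, b i • gradVec d T (P z i))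
      apply HasFDerivAt.fun_sum
      intro j _
      exact ((hGTd j z).hasFDerivAt).const_smul (b j)
    have h2 : HasFDerivAt (fun z : (Fin d → ℝ) × (Fin d → ℝ) =>
          z.2 - h • ∑ i, bh i • gradVec d V (Q z i))
        (ContinuousLinearMap.snd ℝ _ _ - h • ∑ i, bh i • KV i) z := by
      apply (hasFDerivAt_snd).sub
      apply HasFDerivAt.const_smul (c := h) (f := fun z => ∑ i, bh i • gradVec d V (Q z i))
      apply HasFDerivAt.fun_sum
      intro j _
      exact ((hGVd j z).hasFDerivAt).const_smul (bh j)
    have hPhi : HasFDerivAt Φ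
        ((ContinuousLinearMap.fst ℝ _ _ + h • ∑ i, b i • KT i).prod
         (ContinuousLinearMap.snd ℝ _ _ - h • ∑ i, bh i • KV i)) z := HasFDerivAt.prodMk h1 h2
    rw [hPhi.fderiv]
    simp [ContinuousLinearMap.sum_apply]
  -- symmetry through the Hessians
  have symT : ∀ i (x y : (Fin d → ℝ) × (Fin d → ℝ)),
      dotf (KT i x) (DP i y) = dotf (KT i y) (DP i x) := by
    intro i x y
    rw [hKT i]
    simp only [ContinuousLinearMap.comp_apply]
    exact grad_symm hT (P z i) (DP i x) (DP i y)
  have symV : ∀ i (x y : (Fin d → ℝ) × (Fin d → ℝ)),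
      dotf (KV i x) (DQ i y) = dotf (KV i y) (DQ i x) := by
    intro i x y
    rw [hKV i]
    simp only [ContinuousLinearMap.comp_apply]
    exact grad_symm hV (Q z i) (DQ i x) (DQ i y)
  -- scalar abbreviations
  set g : Fin ns → ℝ := fun i => dotf (KT i u) (DP i v) with hg
  set e : Fin ns → ℝ := fun i => dotf (KV i u) (DQ i v) with he
  set S : Fin ns → Fin ns → ℝ := fun i j => dotf (KT i u) (KV j v) with hS
  set S' : Fin ns → Fin ns → ℝ := fun i j => dotf (KV i u) (KT j v) with hS'
  -- micro identities
  have id1 : ∀ i, dotf (KT i u) v.2 = g i + h * ∑ j, ah i j * S i j := by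
    intro i
    have hv2 : v.2 = DP i v + h • ∑ j, ah i j • KV j v := by
      rw [dP i v]; abel
    rw [hv2, dotf_add_right, dotf_smul_right, dotf_sum_right]
    congr 1
    congr 1
    exact Finset.sum_congr rfl fun j _ => dotf_smul_right _ _ _
  have id2 : ∀ j, dotf u.2 (KT j v) = g j + h * ∑ i, ah j i * S' i j := by
    intro j
    have hu2 : u.2 = DP j u + h • ∑ i, ah j i • KV i u := by
      rw [dP j u]; abel
    rw [dotf_comm, hu2, dotf_add_right, dotf_smul_right, dotf_sum_right]
    congr 1
    · exact symT j v u
    congr 1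
    refine Finset.sum_congr rfl fun i _ => ?_
    rw [dotf_smul_right, dotf_comm]
  have id3 : ∀ j, dotf u.1 (KV j v) = e j - h * ∑ i, a j i * S i j := by
    intro j
    have hu1 : u.1 = DQ j u - h • ∑ i, a j i • KT i u := by
      rw [dQ j u]; abel
    rw [dotf_comm, hu1, dotf_sub_right, dotf_smul_right, dotf_sum_right]
    congr 1
    · exact symV j v u
    congr 1
    refine Finset.sum_congr rfl fun i _ => ?_
    rw [dotf_smul_right, dotf_comm]
  have id4 : ∀ i, dotf (KV i u) v.1 = e i - h * ∑ j, a i j * S' i j := by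
    intro i
    have hv1 : v.1 = DQ i v - h • ∑ j, a i j • KT j v := by
      rw [dQ i v]; abel
    rw [hv1, dotf_sub_right, dotf_smul_right, dotf_sum_right]
    congr 1
    congr 1
    exact Finset.sum_congr rfl fun j _ => dotf_smul_right _ _ _
  -- combined sums
  have A1 : ∑ i, b i * dotf (KT i u) v.2
      = ∑ i, b i * g i + h * ∑ i, ∑ j, (b i * ah i j) * S i j := by
    simp only [id1, mul_add, Finset.sum_add_distrib]
    congr 1
    simp only [Finset.mul_sum]
    exact Finset.sum_congr rfl fun i _ => Finset.sum_congr rfl fun j _ => by ring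
  have A2 : ∑ j, bh j * dotf u.1 (KV j v)
      = ∑ j, bh j * e j - h * ∑ i, ∑ j, (bh j * a j i) * S i j := by
    simp only [id3, mul_sub, Finset.sum_sub_distrib]
    congr 1
    simp only [Finset.mul_sum]
    rw [Finset.sum_comm]
    exact Finset.sum_congr rfl fun i _ => Finset.sum_congr rfl fun j _ => by ring
  have A3 : ∑ i, bh i * dotf (KV i u) v.1
      = ∑ i, bh i * e i - h * ∑ i, ∑ j, (bh i * a i j) * S' i j := by
    simp only [id4, mul_sub, Finset.sum_sub_distrib]
    congr 1
    simp only [Finset.mul_sum]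
    exact Finset.sum_congr rfl fun i _ => Finset.sum_congr rfl fun j _ => by ring
  have A4 : ∑ j, b j * dotf u.2 (KT j v)
      = ∑ j, b j * g j + h * ∑ i, ∑ j, (b j * ah j i) * S' i j := by
    simp only [id2, mul_add, Finset.sum_add_distrib]
    congr 1
    simp only [Finset.mul_sum]
    rw [Finset.sum_comm]
    exact Finset.sum_congr rfl fun i _ => Finset.sum_congr rfl fun j _ => by ring
  -- the key cancellation
  have key : ∑ i, b i * dotf (KT i u) v.2 - ∑ j, bh j * dotf u.1 (KV j v)
      + ∑ i, bh i * dotf (KV i u) v.1 - ∑ j, b j * dotf u.2 (KT j v)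
      = h * ∑ i, ∑ j, (b i * bh j) * S i j - h * ∑ i, ∑ j, (bh i * b j) * S' i j := by
    rw [A1, A2, A3, A4]
    have c1 : ∑ i, ∑ j, (b i * ah i j) * S i j + ∑ i, ∑ j, (bh j * a j i) * S i j
        = ∑ i, ∑ j, (b i * bh j) * S i j := by
      rw [← Finset.sum_add_distrib]
      refine Finset.sum_congr rfl fun i _ => ?_
      rw [← Finset.sum_add_distrib]
      refine Finset.sum_congr rfl fun j _ => ?_
      linear_combination S i j * hcompat i j
    have c2 : ∑ i, ∑ j, (bh i * a i j) * S' i j + ∑ i, ∑ j, (b j * ah j i) * S' i j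
        = ∑ i, ∑ j, (bh i * b j) * S' i j := by
      rw [← Finset.sum_add_distrib]
      refine Finset.sum_congr rfl fun i _ => ?_
      rw [← Finset.sum_add_distrib]
      refine Finset.sum_congr rfl fun j _ => ?_
      linear_combination S' i j * hcompat j i
    linear_combination h * c1 - h * c2
  -- final assembly
  rw [canonicalForm_eq_dotf, canonicalForm_eq_dotf, dPhi u, dPhi v]
  dsimp only
  rw [dotf_add_left, dotf_sub_right, dotf_sub_right, dotf_sub_left, dotf_add_right,
    dotf_add_right]
  have e1 : dotf u.1 (h • ∑ i, bh i • KV i v) = h * ∑ j, bh j * dotf u.1 (KV j v) := by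
    rw [dotf_smul_right, dotf_sum_right]
    congr 1
    exact Finset.sum_congr rfl fun j _ => dotf_smul_right _ _ _
  have e2 : dotf (h • ∑ i, b i • KT i u) v.2 = h * ∑ i, b i * dotf (KT i u) v.2 := by
    rw [dotf_smul_left, dotf_sum_left]
    congr 1
    exact Finset.sum_congr rfl fun i _ => dotf_smul_left _ _ _
  have e3 : dotf (h • ∑ i, b i • KT i u) (h • ∑ i, bh i • KV i v)
      = h * (h * ∑ i, ∑ j, (b i * bh j) * S i j) := by
    simp only [dotf_smul_left, dotf_sum_left, dotf_smul_right, dotf_sum_right,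
      Finset.mul_sum, hS]
    rw [Finset.sum_comm]
    exact Finset.sum_congr rfl fun i _ => Finset.sum_congr rfl fun j _ => by ring
  have e4 : dotf u.2 (h • ∑ i, b i • KT i v) = h * ∑ j, b j * dotf u.2 (KT j v) := by
    rw [dotf_smul_right, dotf_sum_right]
    congr 1
    exact Finset.sum_congr rfl fun j _ => dotf_smul_right _ _ _
  have e5 : dotf (h • ∑ i, bh i • KV i u) v.1 = h * ∑ i, bh i * dotf (KV i u) v.1 := by
    rw [dotf_smul_left, dotf_sum_left]
    congr 1
    exact Finset.sum_congr rfl fun i _ => dotf_smul_left _ _ _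
  have e6 : dotf (h • ∑ i, bh i • KV i u) (h • ∑ i, b i • KT i v)
      = h * (h * ∑ i, ∑ j, (bh i * b j) * S' i j) := by
    simp only [dotf_smul_left, dotf_sum_left, dotf_smul_right, dotf_sum_right,
      Finset.mul_sum, hS']
    rw [Finset.sum_comm]
    exact Finset.sum_congr rfl fun i _ => Finset.sum_congr rfl fun j _ => by ring
  rw [e1, e2, e3, e4, e5, e6]
  linear_combination h * key
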